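/- Let R_1, …, R_n be pairwise disjoint closed axis-aligned rectangles contained in the boundary B, and let an escape assignment choose for each R_i a direction whose escape path is disjoint from every other rectangle R_j (j ≠ i) of the family. Then every point of B lies in at most 2 of the chosen escape paths; that is, the assignment has density at most 2 (routing a one-level instance is a 2-approximation). -/

import Mathlib

/-- One of the four axis-aligned escape directions. -/
inductive Dir | left | right | up | down
deriving DecidableEq

instance : Fintype Dir :=
  ⟨{Dir.left, Dir.right, Dir.up, Dir.down}, by intro x; cases x <;> simp⟩

/-- A closed axis-aligned rectangle `[xmin,xmax] × [ymin,ymax]`. -/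
structure Rect where
  xmin : ℝ
  xmax : ℝ
  ymin : ℝ
  ymax : ℝ

/-- The point set of a rectangle. -/
def Rect.pts (r : Rect) : Set (ℝ × ℝ) :=
  {p | r.xmin ≤ p.1 ∧ p.1 ≤ r.xmax ∧ r.ymin ≤ p.2 ∧ p.2 ≤ r.ymax}

/-- The rectangle is a genuine (nonempty) closed rectangle. -/
def Rect.proper (r : Rect) : Prop := r.xmin ≤ r.xmax ∧ r.ymin ≤ r.ymax

/-- The boundary box `B = [0,W] × [0,H]`. -/
def boundaryBox (W H : ℝ) : Set (ℝ × ℝ) := {p | 0 ≤ p.1 ∧ p.1 ≤ W ∧ 0 ≤ p.2 ∧ p.2 ≤ H}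

/-- The rectangle is contained in the boundary box `[0,W] × [0,H]`. -/
def Rect.inB (W H : ℝ) (r : Rect) : Prop :=
  0 ≤ r.xmin ∧ r.xmax ≤ W ∧ 0 ≤ r.ymin ∧ r.ymax ≤ H

/-- The escape path of a rectangle in a given direction, inside `[0,W] × [0,H]`. -/
def Rect.escape (W H : ℝ) (r : Rect) : Dir → Set (ℝ × ℝ)
  | Dir.right => {p | r.xmin ≤ p.1 ∧ p.1 ≤ W ∧ r.ymin ≤ p.2 ∧ p.2 ≤ r.ymax}
  | Dir.left  => {p | 0 ≤ p.1 ∧ p.1 ≤ r.xmax ∧ r.ymin ≤ p.2 ∧ p.2 ≤ r.ymax}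
  | Dir.up    => {p | r.xmin ≤ p.1 ∧ p.1 ≤ r.xmax ∧ r.ymin ≤ p.2 ∧ p.2 ≤ H}
  | Dir.down  => {p | r.xmin ≤ p.1 ∧ p.1 ≤ r.xmax ∧ 0 ≤ p.2 ∧ p.2 ≤ r.ymax}

/-- Density at point `p` of the escape assignment `σ` restricted to the subfamily `S`. -/
noncomputable def density {n : ℕ} (W H : ℝ) (R : Fin n → Rect) (S : Set (Fin n))
    (σ : Fin n → Dir) (p : ℝ × ℝ) : ℕ :=
  {i | i ∈ S ∧ p ∈ (R i).escape W H (σ i)}.ncard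

/-- The optimal (minimum over assignments of the maximum over points of `B`) density of
the subfamily `S`. -/
noncomputable def optDensity {n : ℕ} (W H : ℝ) (R : Fin n → Rect) (S : Set (Fin n)) : ℕ :=
  sInf {k | ∃ σ : Fin n → Dir, ∀ p ∈ boundaryBox W H, density W H R S σ p ≤ k}

/-- `R j` blocks `R i` in direction `α`. -/
def blocks {n : ℕ} (W H : ℝ) (R : Fin n → Rect) (α : Dir) (j i : Fin n) : Prop :=
  j ≠ i ∧ ¬ Disjoint (R j).pts ((R i).escape W H α)

/-- `R i` is free in direction `α` within the subfamily `S`: no other rectangle of `S`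
blocks it in direction `α`. -/
def free {n : ℕ} (W H : ℝ) (R : Fin n → Rect) (S : Set (Fin n)) (i : Fin n) (α : Dir) : Prop :=
  ∀ j ∈ S, j ≠ i → Disjoint ((R i).escape W H α) (R j).pts

/-- `peel W H R ℓ` is the set of indices remaining after removing peeling levels `1,…,ℓ`. -/
def peel {n : ℕ} (W H : ℝ) (R : Fin n → Rect) : ℕ → Set (Fin n)
  | 0 => Set.univ
  | ℓ + 1 => {i ∈ peel W H R ℓ | ¬ ∃ α, free W H R (peel W H R ℓ) i α}

/-- The peeling level of rectangle `R i` (the least `ℓ` at which it has been removed). -/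
noncomputable def levelOf {n : ℕ} (W H : ℝ) (R : Fin n → Rect) (i : Fin n) : ℕ :=
  sInf {ℓ | i ∉ peel W H R ℓ}

/-- The number `ρ` of nonempty peeling levels. -/
noncomputable def numLevels {n : ℕ} (W H : ℝ) (R : Fin n → Rect) : ℕ :=
  sInf {ℓ | peel W H R ℓ = ∅}

section Aux

variable {n : ℕ} (W H : ℝ) (R : Fin n → Rect)

lemma mem_escape_iff (r : Rect) (p : ℝ × ℝ) :
    (p ∈ r.escape W H Dir.right ↔ r.xmin ≤ p.1 ∧ p.1 ≤ W ∧ r.ymin ≤ p.2 ∧ p.2 ≤ r.ymax) ∧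
    (p ∈ r.escape W H Dir.left ↔ 0 ≤ p.1 ∧ p.1 ≤ r.xmax ∧ r.ymin ≤ p.2 ∧ p.2 ≤ r.ymax) ∧
    (p ∈ r.escape W H Dir.up ↔ r.xmin ≤ p.1 ∧ p.1 ≤ r.xmax ∧ r.ymin ≤ p.2 ∧ p.2 ≤ H) ∧
    (p ∈ r.escape W H Dir.down ↔ r.xmin ≤ p.1 ∧ p.1 ≤ r.xmax ∧ 0 ≤ p.2 ∧ p.2 ≤ r.ymax) := by
  constructor <;> [skip; constructor] <;> [skip; skip; constructor] <;> exact Iff.rfl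

lemma horiz_clash
    (hprop : ∀ i, (R i).proper) (hin : ∀ i, (R i).inB W H)
    (hdisj : ∀ i j, i ≠ j → Disjoint (R i).pts (R j).pts)
    (σ : Fin n → Dir)
    (hfree : ∀ i j, j ≠ i → Disjoint ((R i).escape W H (σ i)) (R j).pts)
    (p : ℝ × ℝ) (i j : Fin n) (hij : i ≠ j)
    (hi : σ i = Dir.left ∨ σ i = Dir.right) (hj : σ j = Dir.left ∨ σ j = Dir.right)
    (hpi : p ∈ (R i).escape W H (σ i)) (hpj : p ∈ (R j).escape W H (σ j)) : False := by
  -- y-interval memberships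
  have hyi : (R i).ymin ≤ p.2 ∧ p.2 ≤ (R i).ymax := by
    rcases hi with h | h <;> rw [h] at hpi <;>
      exact ⟨hpi.2.2.1, hpi.2.2.2⟩
  have hyj : (R j).ymin ≤ p.2 ∧ p.2 ≤ (R j).ymax := by
    rcases hj with h | h <;> rw [h] at hpj <;>
      exact ⟨hpj.2.2.1, hpj.2.2.2⟩
  -- x-intervals are disjoint
  have hx : (R i).xmax < (R j).xmin ∨ (R j).xmax < (R i).xmin := by
    by_contra hc
    push_neg at hc
    obtain ⟨h1, h2⟩ := hc
    have hpi1 := (hprop i).1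
    have hpj1 := (hprop j).1
    exact Set.disjoint_left.mp (hdisj i j hij)
      (show (max (R i).xmin (R j).xmin, p.2) ∈ (R i).pts from
        ⟨le_max_left _ _, max_le hpi1 h1, hyi.1, hyi.2⟩)
      ⟨le_max_right _ _, max_le h2 hpj1, hyj.1, hyj.2⟩
  -- core case: xmax i < xmin j (up to swapping i and j)
  have core : ∀ a b : Fin n, a ≠ b →
      σ a = Dir.left ∨ σ a = Dir.right → σ b = Dir.left ∨ σ b = Dir.right →
      p ∈ (R a).escape W H (σ a) → p ∈ (R b).escape W H (σ b) →
      (R a).ymin ≤ p.2 ∧ p.2 ≤ (R a).ymax → (R b).ymin ≤ p.2 ∧ p.2 ≤ (R b).ymax →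
      (R a).xmax < (R b).xmin → False := by
    intro a b hab ha hb hpa hpb hya hyb hlt
    rcases ha with ha | ha
    · rcases hb with hb | hb
      · -- both left : b's path contains (xmax a, p.2) ∈ R a
        refine Set.disjoint_left.mp (hfree b a hab)
          (show ((R a).xmax, p.2) ∈ (R b).escape W H (σ b) from ?_)
          ⟨(hprop a).1, le_refl _, hya.1, hya.2⟩
        rw [hb]
        exact ⟨le_trans (hin a).1 (hprop a).1, by linarith [(hprop b).1], hyb.1, hyb.2⟩
      · -- a left, b right : p.1 ≤ xmax a < xmin b ≤ p.1
        rw [ha] at hpa; rw [hb] at hpb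
        linarith [hpa.2.1, hpb.1]
    · -- a right : a's path contains (xmin b, p.2) ∈ R b
      refine Set.disjoint_left.mp (hfree a b hab.symm)
        (show ((R b).xmin, p.2) ∈ (R a).escape W H (σ a) from ?_)
        ⟨le_refl _, (hprop b).1, hyb.1, hyb.2⟩
      rw [ha]
      exact ⟨by linarith [(hprop a).1], le_trans (hprop b).1 (hin b).2.1, hya.1, hya.2⟩
  rcases hx with hx | hx
  · exact core i j hij hi hj hpi hpj hyi hyj hx
  · exact core j i hij.symm hj hi hpj hpi hyj hyi hx

lemma vert_clash
    (hprop : ∀ i, (R i).proper) (hin : ∀ i, (R i).inB W H)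
    (hdisj : ∀ i j, i ≠ j → Disjoint (R i).pts (R j).pts)
    (σ : Fin n → Dir)
    (hfree : ∀ i j, j ≠ i → Disjoint ((R i).escape W H (σ i)) (R j).pts)
    (p : ℝ × ℝ) (i j : Fin n) (hij : i ≠ j)
    (hi : σ i = Dir.down ∨ σ i = Dir.up) (hj : σ j = Dir.down ∨ σ j = Dir.up)
    (hpi : p ∈ (R i).escape W H (σ i)) (hpj : p ∈ (R j).escape W H (σ j)) : False := by
  have hxi : (R i).xmin ≤ p.1 ∧ p.1 ≤ (R i).xmax := by
    rcases hi with h | h <;> rw [h] at hpi <;> exact ⟨hpi.1, hpi.2.1⟩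
  have hxj : (R j).xmin ≤ p.1 ∧ p.1 ≤ (R j).xmax := by
    rcases hj with h | h <;> rw [h] at hpj <;> exact ⟨hpj.1, hpj.2.1⟩
  have hy : (R i).ymax < (R j).ymin ∨ (R j).ymax < (R i).ymin := by
    by_contra hc
    push_neg at hc
    obtain ⟨h1, h2⟩ := hc
    have hpi2 := (hprop i).2
    have hpj2 := (hprop j).2
    exact Set.disjoint_left.mp (hdisj i j hij)
      (show (p.1, max (R i).ymin (R j).ymin) ∈ (R i).pts from
        ⟨hxi.1, hxi.2, le_max_left _ _, max_le hpi2 h1⟩)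
      ⟨hxj.1, hxj.2, le_max_right _ _, max_le h2 hpj2⟩
  have core : ∀ a b : Fin n, a ≠ b →
      σ a = Dir.down ∨ σ a = Dir.up → σ b = Dir.down ∨ σ b = Dir.up →
      p ∈ (R a).escape W H (σ a) → p ∈ (R b).escape W H (σ b) →
      (R a).xmin ≤ p.1 ∧ p.1 ≤ (R a).xmax → (R b).xmin ≤ p.1 ∧ p.1 ≤ (R b).xmax →
      (R a).ymax < (R b).ymin → False := by
    intro a b hab ha hb hpa hpb hxa hxb hlt
    rcases ha with ha | ha
    · rcases hb with hb | hb
      · -- both down : b's path contains (p.1, ymax a) ∈ R a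
        refine Set.disjoint_left.mp (hfree b a hab)
          (show (p.1, (R a).ymax) ∈ (R b).escape W H (σ b) from ?_)
          ⟨hxa.1, hxa.2, (hprop a).2, le_refl _⟩
        rw [hb]
        exact ⟨hxb.1, hxb.2, le_trans (hin a).2.2.1 (hprop a).2, by linarith [(hprop b).2]⟩
      · -- a down, b up : p.2 ≤ ymax a < ymin b ≤ p.2
        rw [ha] at hpa; rw [hb] at hpb
        linarith [hpa.2.2.2, hpb.2.2.1]
    · -- a up : a's path contains (p.1, ymin b) ∈ R b
      refine Set.disjoint_left.mp (hfree a b hab.symm)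
        (show (p.1, (R b).ymin) ∈ (R a).escape W H (σ a) from ?_)
        ⟨hxb.1, hxb.2, le_refl _, (hprop b).2⟩
      rw [ha]
      exact ⟨hxa.1, hxa.2, by linarith [(hprop a).2], le_trans (hprop b).2 (hin b).2.2.2⟩
  rcases hy with hy | hy
  · exact core i j hij hi hj hpi hpj hxi hxj hy
  · exact core j i hij.symm hj hi hpj hpi hxj hxi hy

end Aux

/-- If the rectangles are pairwise disjoint and every chosen escape path is
disjoint from every other rectangle of the family (a one-level instance routed greedily),
then every point of `B` lies in at most 2 chosen escape paths. -/
theorem one_level_two_approx {n : ℕ} (W H : ℝ) (R : Fin n → Rect)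
    (hprop : ∀ i, (R i).proper) (hin : ∀ i, (R i).inB W H)
    (hdisj : ∀ i j, i ≠ j → Disjoint (R i).pts (R j).pts)
    (σ : Fin n → Dir)
    (hfree : ∀ i j, j ≠ i → Disjoint ((R i).escape W H (σ i)) (R j).pts) :
    ∀ p ∈ boundaryBox W H, density W H R Set.univ σ p ≤ 2 := by
  intro p _
  classical
  set T : Set (Fin n) := {i | i ∈ Set.univ ∧ p ∈ (R i).escape W H (σ i)} with hT
  have hTfin : T.Finite := Set.toFinite T
  set f : Fin n → Bool := fun i => match σ i with
    | Dir.left => true | Dir.right => true | Dir.up => false | Dir.down => false with hf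
  have hinj : Set.InjOn f T := by
    intro i hiT j hjT hfij
    by_contra hij
    have hpi : p ∈ (R i).escape W H (σ i) := hiT.2
    have hpj : p ∈ (R j).escape W H (σ j) := hjT.2
    cases hσi : σ i <;> cases hσj : σ j <;>
      simp only [hf, hσi, hσj] at hfij <;>
      first
        | exact horiz_clash W H R hprop hin hdisj σ hfree p i j hij
            (Or.inl hσi) (Or.inl hσj) hpi hpj
        | exact horiz_clash W H R hprop hin hdisj σ hfree p i j hij
            (Or.inl hσi) (Or.inr hσj) hpi hpj
        | exact horiz_clash W H R hprop hin hdisj σ hfree p i j hij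
            (Or.inr hσi) (Or.inl hσj) hpi hpj
        | exact horiz_clash W H R hprop hin hdisj σ hfree p i j hij
            (Or.inr hσi) (Or.inr hσj) hpi hpj
        | exact vert_clash W H R hprop hin hdisj σ hfree p i j hij
            (Or.inl hσi) (Or.inl hσj) hpi hpj
        | exact vert_clash W H R hprop hin hdisj σ hfree p i j hij
            (Or.inl hσi) (Or.inr hσj) hpi hpj
        | exact vert_clash W H R hprop hin hdisj σ hfree p i j hij
            (Or.inr hσi) (Or.inl hσj) hpi hpj
        | exact vert_clash W H R hprop hin hdisj σ hfree p i j hij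
            (Or.inr hσi) (Or.inr hσj) hpi hpj
        | exact absurd hfij (by decide)
  have h1 : density W H R Set.univ σ p = T.ncard := rfl
  rw [h1, ← Set.ncard_image_of_injOn hinj]
  calc (f '' T).ncard ≤ (Set.univ : Set Bool).ncard :=
        Set.ncard_le_ncard (Set.subset_univ _) Set.finite_univ
    _ = 2 := by simp [Set.ncard_univ]
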